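/- Let A be an n×m real matrix with no zero rows and no zero columns, and let k : Fin n → ℕ₊ and l : Fin m → ℕ₊. Let A' be the split matrix of A with multiplicities k and l (rows indexed by (i,s), s ∈ Fin k_i, columns by (j,t), t ∈ Fin l_j, entry a_{ij}/(k_i·l_j)). Then ‖A'‖_G = ‖A‖_G, where ‖·‖_G is the Grothendieck norm. -/

import Mathlib

open scoped BigOperators

/-- The ℓ²→ℓ² operator norm of a real matrix. -/
noncomputable def l2OpNorm {α β : Type*} [Fintype α] [Fintype β] [DecidableEq β]
    (A : Matrix α β ℝ) : ℝ :=
  ‖LinearMap.toContinuousLinearMap (Matrix.toEuclideanLin A)‖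

/-- The ∞→1 norm of a real matrix: `max_{x ∈ {-1,1}ⁿ, y ∈ {-1,1}^m} xᵀ A y`. -/
noncomputable def normInftyOne {α β : Type*} [Fintype α] [Fintype β] (A : Matrix α β ℝ) : ℝ :=
  ⨆ p : (α → Bool) × (β → Bool),
    ∑ i, ∑ j, (if p.1 i then (1:ℝ) else -1) * A i j * (if p.2 j then (1:ℝ) else -1)

/-- The Grothendieck norm: sup over `k` and families of unit vectors of `Σ a_{ij} ⟨p_i, q_j⟩`. -/
noncomputable def grothendieckNorm {α β : Type*} [Fintype α] [Fintype β]
    (A : Matrix α β ℝ) : ℝ :=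
  sSup { r : ℝ | ∃ (k : ℕ) (p : α → EuclideanSpace ℝ (Fin k)) (q : β → EuclideanSpace ℝ (Fin k)),
    (∀ i, ‖p i‖ = 1) ∧ (∀ j, ‖q j‖ = 1) ∧
    r = ∑ i, ∑ j, A i j * (inner ℝ (p i) (q j) : ℝ) }

/-- The matrix obtained from `A` by splitting row `i` into `k i` equal rows and
column `j` into `l j` equal columns. -/
noncomputable def splitMatrix {n m : ℕ} (A : Matrix (Fin n) (Fin m) ℝ)
    (k : Fin n → ℕ+) (l : Fin m → ℕ+) :
    Matrix ((i : Fin n) × Fin (k i : ℕ)) ((j : Fin m) × Fin (l j : ℕ)) ℝ :=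
  fun p q => A p.1 q.1 / (((k p.1 : ℕ) : ℝ) * ((l q.1 : ℕ) : ℝ))

/-- Extend a vector of norm ≤ 1 to a unit vector using two extra coordinates. -/
noncomputable def extVec {d : ℕ} (u : EuclideanSpace ℝ (Fin d)) (c : Fin 2) :
    EuclideanSpace ℝ (Fin d ⊕ Fin 2) :=
  WithLp.toLp 2 (Sum.elim u (fun s => if s = c then Real.sqrt (1 - ‖u‖^2) else 0))

lemma extVec_inner_self {d : ℕ} (u : EuclideanSpace ℝ (Fin d)) (c : Fin 2) (hu : ‖u‖ ≤ 1) :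
    (inner ℝ (extVec u c) (extVec u c) : ℝ) = 1 := by
  have h1 : (0:ℝ) ≤ 1 - ‖u‖^2 := by nlinarith [norm_nonneg u]
  have hl : ∑ a : Fin d, u a * u a = ‖u‖^2 := by
    rw [← real_inner_self_eq_norm_sq, PiLp.inner_apply]
    simp only [RCLike.inner_apply, conj_trivial]
  simp only [PiLp.inner_apply, RCLike.inner_apply, conj_trivial, Fintype.sum_sum_type,
    extVec, PiLp.toLp_apply, Sum.elim_inl, Sum.elim_inr]
  rw [hl, Fin.sum_univ_two]
  fin_cases c <;> simp [Real.mul_self_sqrt h1]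

lemma extVec_norm {d : ℕ} (u : EuclideanSpace ℝ (Fin d)) (c : Fin 2) (hu : ‖u‖ ≤ 1) :
    ‖extVec u c‖ = 1 := by
  rw [norm_eq_sqrt_real_inner, extVec_inner_self u c hu, Real.sqrt_one]

lemma extVec_inner {d : ℕ} (u v : EuclideanSpace ℝ (Fin d)) :
    (inner ℝ (extVec u 0) (extVec v 1) : ℝ) = (inner ℝ u v : ℝ) := by
  simp only [PiLp.inner_apply, RCLike.inner_apply, conj_trivial, Fintype.sum_sum_type,
    extVec, PiLp.toLp_apply, Sum.elim_inl, Sum.elim_inr, Fin.sum_univ_two]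
  norm_num


/-- Splitting rows and columns preserves the Grothendieck norm. -/
theorem grothendieckNorm_splitMatrix (n m : ℕ) (A : Matrix (Fin n) (Fin m) ℝ)
    (hrow : ∀ i, ∃ j, A i j ≠ 0) (hcol : ∀ j, ∃ i, A i j ≠ 0)
    (k : Fin n → ℕ+) (l : Fin m → ℕ+) :
    grothendieckNorm (splitMatrix A k l) = grothendieckNorm A := by
  unfold grothendieckNorm
  congr 1
  simp only [splitMatrix]
  have hk : ∀ i, (((k i : ℕ) : ℝ)) ≠ 0 := fun i => Nat.cast_ne_zero.mpr (k i).ne_zero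
  have hl : ∀ j, (((l j : ℕ) : ℝ)) ≠ 0 := fun j => Nat.cast_ne_zero.mpr (l j).ne_zero
  ext r
  simp only [Set.mem_setOf_eq]
  constructor
  · rintro ⟨d, p', q', hp', hq', rfl⟩
    -- averages
    set u : Fin n → EuclideanSpace ℝ (Fin d) :=
      fun i => (((k i : ℕ) : ℝ))⁻¹ • ∑ s : Fin (k i : ℕ), p' ⟨i, s⟩ with hu_def
    set v : Fin m → EuclideanSpace ℝ (Fin d) :=
      fun j => (((l j : ℕ) : ℝ))⁻¹ • ∑ t : Fin (l j : ℕ), q' ⟨j, t⟩ with hv_def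
    have hu : ∀ i, ‖u i‖ ≤ 1 := by
      intro i
      have h1 : ‖∑ s : Fin (k i : ℕ), p' ⟨i, s⟩‖ ≤ ((k i : ℕ) : ℝ) := by
        calc ‖∑ s : Fin (k i : ℕ), p' ⟨i, s⟩‖ ≤ ∑ s : Fin (k i : ℕ), ‖p' ⟨i, s⟩‖ :=
              norm_sum_le _ _
          _ = ((k i : ℕ) : ℝ) := by simp [hp']
      have hkpos : (0:ℝ) < ((k i : ℕ) : ℝ) := by positivity
      calc ‖u i‖ = (((k i : ℕ) : ℝ))⁻¹ * ‖∑ s : Fin (k i : ℕ), p' ⟨i, s⟩‖ := by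
            rw [hu_def]; rw [norm_smul, Real.norm_eq_abs, abs_of_nonneg (by positivity)]
        _ ≤ (((k i : ℕ) : ℝ))⁻¹ * ((k i : ℕ) : ℝ) := by gcongr
        _ = 1 := inv_mul_cancel₀ (hk i)
    have hv : ∀ j, ‖v j‖ ≤ 1 := by
      intro j
      have h1 : ‖∑ t : Fin (l j : ℕ), q' ⟨j, t⟩‖ ≤ ((l j : ℕ) : ℝ) := by
        calc ‖∑ t : Fin (l j : ℕ), q' ⟨j, t⟩‖ ≤ ∑ t : Fin (l j : ℕ), ‖q' ⟨j, t⟩‖ :=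
              norm_sum_le _ _
          _ = ((l j : ℕ) : ℝ) := by simp [hq']
      calc ‖v j‖ = (((l j : ℕ) : ℝ))⁻¹ * ‖∑ t : Fin (l j : ℕ), q' ⟨j, t⟩‖ := by
            rw [hv_def]; rw [norm_smul, Real.norm_eq_abs, abs_of_nonneg (by positivity)]
        _ ≤ (((l j : ℕ) : ℝ))⁻¹ * ((l j : ℕ) : ℝ) := by gcongr
        _ = 1 := inv_mul_cancel₀ (hl j)
    have hin : ∀ i j, (inner ℝ (u i) (v j) : ℝ)
        = (((k i:ℕ):ℝ))⁻¹ * ((((l j:ℕ):ℝ))⁻¹ *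
            ∑ s : Fin (k i : ℕ), ∑ t : Fin (l j : ℕ), (inner ℝ (p' ⟨i,s⟩) (q' ⟨j,t⟩) : ℝ)) := by
      intro i j
      rw [hu_def, hv_def]
      simp only [real_inner_smul_left, real_inner_smul_right, sum_inner, inner_sum,
        Finset.mul_sum]
      rw [Finset.sum_comm]
      exact Finset.sum_congr rfl fun s _ => Finset.sum_congr rfl fun t _ => by ring
    let e : EuclideanSpace ℝ (Fin d ⊕ Fin 2) ≃ₗᵢ[ℝ] EuclideanSpace ℝ (Fin (d + 2)) :=
      LinearIsometryEquiv.piLpCongrLeft 2 ℝ ℝ finSumFinEquiv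
    refine ⟨d + 2, fun i => e (extVec (u i) 0), fun j => e (extVec (v j) 1),
      fun i => by rw [e.norm_map]; exact extVec_norm _ _ (hu i),
      fun j => by rw [e.norm_map]; exact extVec_norm _ _ (hv j), ?_⟩
    have hPQ : ∀ i j, (inner ℝ (e (extVec (u i) 0)) (e (extVec (v j) 1)) : ℝ)
        = (inner ℝ (u i) (v j) : ℝ) := fun i j => by
      rw [e.inner_map_map, extVec_inner]
    calc ∑ x : (i : Fin n) × Fin (k i : ℕ), ∑ y : (j : Fin m) × Fin (l j : ℕ),
          A x.1 y.1 / (((k x.1 : ℕ) : ℝ) * ((l y.1 : ℕ) : ℝ)) * (inner ℝ (p' x) (q' y) : ℝ)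
        = ∑ i, ∑ s : Fin (k i : ℕ), ∑ j, ∑ t : Fin (l j : ℕ),
            A i j / (((k i : ℕ) : ℝ) * ((l j : ℕ) : ℝ)) * (inner ℝ (p' ⟨i,s⟩) (q' ⟨j,t⟩) : ℝ) := by
          rw [← Finset.univ_sigma_univ, Finset.sum_sigma]
          refine Finset.sum_congr rfl fun i _ => Finset.sum_congr rfl fun s _ => ?_
          rw [← Finset.univ_sigma_univ, Finset.sum_sigma]
      _ = ∑ i, ∑ j, A i j * (inner ℝ (u i) (v j) : ℝ) := by
          refine Finset.sum_congr rfl fun i _ => ?_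
          rw [Finset.sum_comm]
          refine Finset.sum_congr rfl fun j _ => ?_
          rw [hin i j]
          simp only [Finset.mul_sum]
          exact Finset.sum_congr rfl fun s _ => Finset.sum_congr rfl fun t _ => by
            field_simp
      _ = ∑ i, ∑ j, A i j * (inner ℝ (e (extVec (u i) 0)) (e (extVec (v j) 1)) : ℝ) := by
          refine Finset.sum_congr rfl fun i _ => Finset.sum_congr rfl fun j _ => ?_
          rw [hPQ]
  · rintro ⟨d, p, q, hp, hq, rfl⟩
    refine ⟨d, fun x => p x.1, fun y => q y.1, fun _ => hp _, fun _ => hq _, ?_⟩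
    calc ∑ i, ∑ j, A i j * (inner ℝ (p i) (q j) : ℝ)
        = ∑ i, ∑ s : Fin (k i : ℕ), ∑ j, ∑ t : Fin (l j : ℕ),
            A i j / (((k i : ℕ) : ℝ) * ((l j : ℕ) : ℝ)) * (inner ℝ (p i) (q j) : ℝ) := by
          refine Finset.sum_congr rfl fun i _ => ?_
          rw [Finset.sum_const, Finset.card_univ, Fintype.card_fin, nsmul_eq_mul,
            Finset.mul_sum]
          refine Finset.sum_congr rfl fun j _ => ?_
          rw [Finset.sum_const, Finset.card_univ, Fintype.card_fin, nsmul_eq_mul]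
          field_simp
      _ = ∑ x : (i : Fin n) × Fin (k i : ℕ), ∑ y : (j : Fin m) × Fin (l j : ℕ),
            A x.1 y.1 / (((k x.1 : ℕ) : ℝ) * ((l y.1 : ℕ) : ℝ)) * (inner ℝ (p x.1) (q y.1) : ℝ) := by
          rw [← Finset.univ_sigma_univ, Finset.sum_sigma]
          refine Finset.sum_congr rfl fun i _ => Finset.sum_congr rfl fun s _ => ?_
          rw [← Finset.univ_sigma_univ, Finset.sum_sigma]
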